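/- Let ρ be a density matrix on a finite-dimensional space S, σ a density matrix on a finite-dimensional space C, and U a unitary on S⊗C such that Tr_S[U(ρ⊗σ)U†] = σ. Then the output state ρ'' = Tr_C[U(ρ⊗σ)U†] satisfies H(ρ'') ≥ H(ρ). -/

import Mathlib

open Matrix BigOperators
open scoped Kronecker ComplexOrder

/-- A density matrix: positive semidefinite with trace 1. -/
def IsDensityMatrix {n : Type*} [Fintype n] [DecidableEq n] (ρ : Matrix n n ℂ) : Prop :=
  ρ.PosSemidef ∧ ρ.trace = 1

/-- The von Neumann entropy `H(ρ) = -Tr[ρ log ρ]`, computed via the eigenvalues of `ρ`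
(with the convention `0 log 0 = 0`). -/
noncomputable def vnEntropy {n : Type*} [Fintype n] [DecidableEq n] (ρ : Matrix n n ℂ) : ℝ :=
  if h : ρ.IsHermitian then -∑ i, h.eigenvalues i * Real.log (h.eigenvalues i) else 0

/-- Partial trace over the first (system) tensor factor. -/
noncomputable def ptraceS {s c : Type*} [Fintype s] [Fintype c]
    (M : Matrix (s × c) (s × c) ℂ) : Matrix c c ℂ :=
  Matrix.of fun i j => ∑ k, M (k, i) (k, j)

/-- Partial trace over the second (catalyst) tensor factor. -/
noncomputable def ptraceC {s c : Type*} [Fintype s] [Fintype c]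
    (M : Matrix (s × c) (s × c) ℂ) : Matrix s s ℂ :=
  Matrix.of fun i j => ∑ k, M (i, k) (j, k)

section Aux

lemma myConjTranspose_kronecker {s c : Type*} [Fintype s] [Fintype c]
    (A : Matrix s s ℂ) (B : Matrix c c ℂ) : (A ⊗ₖ B)ᴴ = Aᴴ ⊗ₖ Bᴴ := by
  ext ⟨i, k⟩ ⟨j, l⟩
  simp [conjTranspose_apply, kroneckerMap_apply, mul_comm]

lemma myKron_unitary {s c : Type*} [Fintype s] [Fintype c] [DecidableEq s] [DecidableEq c]
    {A : Matrix s s ℂ} {B : Matrix c c ℂ}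
    (hA : A ∈ Matrix.unitaryGroup s ℂ) (hB : B ∈ Matrix.unitaryGroup c ℂ) :
    A ⊗ₖ B ∈ Matrix.unitaryGroup (s × c) ℂ := by
  rw [Matrix.mem_unitaryGroup_iff] at hA hB ⊢
  rw [Matrix.star_eq_conjTranspose] at hA hB ⊢
  rw [myConjTranspose_kronecker, ← Matrix.mul_kronecker_mul, hA, hB, Matrix.one_kronecker_one]

lemma trace_ptraceC {s c : Type*} [Fintype s] [Fintype c]
    (M : Matrix (s × c) (s × c) ℂ) : (ptraceC M).trace = M.trace := by
  simp [ptraceC, Matrix.trace, Matrix.diag, Fintype.sum_prod_type]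

lemma ptraceC_isHermitian {s c : Type*} [Fintype s] [Fintype c]
    {M : Matrix (s × c) (s × c) ℂ} (hM : M.IsHermitian) : (ptraceC M).IsHermitian := by
  ext i j
  simp only [conjTranspose_apply, ptraceC, of_apply, star_sum]
  refine Finset.sum_congr rfl fun k _ => ?_
  have := congrFun (congrFun hM (i,k)) (j,k)
  simpa [conjTranspose_apply] using this

lemma trace_mul_kron_one {s c : Type*} [Fintype s] [Fintype c] [DecidableEq c]
    (M : Matrix (s × c) (s × c) ℂ) (N : Matrix s s ℂ) :
    (M * (N ⊗ₖ (1 : Matrix c c ℂ))).trace = (ptraceC M * N).trace := by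
  simp only [Matrix.trace, Matrix.diag, Matrix.mul_apply, ptraceC, of_apply,
    kroneckerMap_apply, Fintype.sum_prod_type, Matrix.one_apply, mul_ite, mul_one, mul_zero,
    Finset.sum_ite_irrel, Finset.sum_ite_eq', Finset.mem_univ, if_true, Finset.sum_mul]
  exact Finset.sum_congr rfl fun x _ => Finset.sum_comm

lemma trace_one_kron_mul {s c : Type*} [Fintype s] [Fintype c] [DecidableEq s]
    (M : Matrix (s × c) (s × c) ℂ) (N : Matrix c c ℂ) :
    (M * ((1 : Matrix s s ℂ) ⊗ₖ N)).trace = (ptraceS M * N).trace := by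
  simp only [Matrix.trace, Matrix.diag, Matrix.mul_apply, ptraceS, of_apply,
    kroneckerMap_apply, Fintype.sum_prod_type, Matrix.one_apply, mul_ite, ite_mul, zero_mul,
    mul_zero, Finset.sum_const_zero, Finset.sum_ite_irrel, Finset.sum_ite_eq,
    Finset.sum_ite_eq', Finset.mem_univ, if_true, Finset.sum_mul, one_mul]
  rw [Finset.sum_comm]
  exact Finset.sum_congr rfl fun x _ => Finset.sum_comm

lemma gibbs_ineq {x y : ℝ} (hx : 0 ≤ x) (hy : 0 ≤ y) (h : x ≠ 0 → y ≠ 0) :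
    0 ≤ x * Real.log x - x * Real.log y - x + y := by
  rcases eq_or_lt_of_le hx with h0 | hx'
  · simp [← h0, hy]
  · have hy' : 0 < y := (hy.lt_of_ne (Ne.symm (h hx'.ne')))
    have hlog := Real.log_le_sub_one_of_pos (div_pos hy' hx')
    rw [Real.log_div hy'.ne' hx'.ne'] at hlog
    have h2 := mul_le_mul_of_nonneg_left hlog hx'.le
    have h3 : x * (y / x) = y := by field_simp
    nlinarith [h2, h3]

lemma xy_log_xy {x y : ℝ} (hx : 0 ≤ x) (hy : 0 ≤ y) :
    x * y * Real.log (x * y) = x * y * Real.log x + x * y * Real.log y := by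
  rcases eq_or_lt_of_le hx with h0 | hx'
  · simp [← h0]
  · rcases eq_or_lt_of_le hy with h0 | hy'
    · simp [← h0]
    · rw [Real.log_mul hx'.ne' hy'.ne']; ring

lemma trace_conj_step {n : Type*} [Fintype n] (X Y Z : Matrix n n ℂ) :
    (Xᴴ * Y * X * Z).trace = (Y * (X * Z * Xᴴ)).trace := by
  rw [show Xᴴ * Y * X * Z = Xᴴ * (Y * (X * Z)) by simp only [Matrix.mul_assoc]]
  rw [Matrix.trace_mul_comm]
  simp only [Matrix.mul_assoc]

end Aux

theorem entropy_nondecreasing_under_catalytic_unitary {dS dC : ℕ}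
    (ρ : Matrix (Fin dS) (Fin dS) ℂ) (σ : Matrix (Fin dC) (Fin dC) ℂ)
    (hρ : IsDensityMatrix ρ) (hσ : IsDensityMatrix σ)
    (U : Matrix (Fin dS × Fin dC) (Fin dS × Fin dC) ℂ)
    (hU : U ∈ Matrix.unitaryGroup (Fin dS × Fin dC) ℂ)
    (hcat : ptraceS (U * (ρ ⊗ₖ σ) * Uᴴ) = σ) :
    vnEntropy ρ ≤ vnEntropy (ptraceC (U * (ρ ⊗ₖ σ) * Uᴴ)) := by
  obtain ⟨hρP, hρtr⟩ := hρ
  obtain ⟨hσP, hσtr⟩ := hσ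
  have hρH : ρ.IsHermitian := hρP.1
  have hσH : σ.IsHermitian := hσP.1
  set τ : Matrix (Fin dS × Fin dC) (Fin dS × Fin dC) ℂ := U * (ρ ⊗ₖ σ) * Uᴴ with hτdef
  -- spectral data
  set p0 : Fin dS → ℝ := hρH.eigenvalues with hp0def
  set q : Fin dC → ℝ := hσH.eigenvalues with hqdef
  set Uρ : Matrix (Fin dS) (Fin dS) ℂ := (hρH.eigenvectorUnitary : Matrix (Fin dS) (Fin dS) ℂ)
    with hUρdef
  set B : Matrix (Fin dC) (Fin dC) ℂ := (hσH.eigenvectorUnitary : Matrix (Fin dC) (Fin dC) ℂ)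
    with hBdef
  set r : Fin dS × Fin dC → ℝ := fun ab => p0 ab.1 * q ab.2 with hrdef
  set V : Matrix (Fin dS × Fin dC) (Fin dS × Fin dC) ℂ := U * (Uρ ⊗ₖ B) with hVdef
  have hUρu : Uρ ∈ Matrix.unitaryGroup (Fin dS) ℂ := hρH.eigenvectorUnitary.2
  have hBu : B ∈ Matrix.unitaryGroup (Fin dC) ℂ := hσH.eigenvectorUnitary.2
  have hVu : V ∈ Matrix.unitaryGroup (Fin dS × Fin dC) ℂ :=
    mul_mem hU (myKron_unitary hUρu hBu)
  have hτspec : τ = V * diagonal (RCLike.ofReal ∘ r) * Vᴴ := by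
    have hρs : ρ = Uρ * diagonal (RCLike.ofReal ∘ p0) * Uρᴴ := by
      have := hρH.spectral_theorem
      rwa [Unitary.conjStarAlgAut_apply, Matrix.star_eq_conjTranspose] at this
    have hσs : σ = B * diagonal (RCLike.ofReal ∘ q) * Bᴴ := by
      have := hσH.spectral_theorem
      rwa [Unitary.conjStarAlgAut_apply, Matrix.star_eq_conjTranspose] at this
    have hd : (fun ab : Fin dS × Fin dC =>
        ((RCLike.ofReal ∘ p0 : Fin dS → ℂ)) ab.1 * ((RCLike.ofReal ∘ q : Fin dC → ℂ)) ab.2)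
        = ((RCLike.ofReal ∘ r : Fin dS × Fin dC → ℂ)) := by
      funext ab
      simp only [hrdef, Function.comp_apply, RCLike.ofReal_mul]
    calc τ = U * ((Uρ * diagonal (RCLike.ofReal ∘ p0) * Uρᴴ) ⊗ₖ
              (B * diagonal (RCLike.ofReal ∘ q) * Bᴴ)) * Uᴴ := by rw [hτdef, ← hρs, ← hσs]
      _ = U * ((Uρ ⊗ₖ B) * (diagonal (RCLike.ofReal ∘ p0) ⊗ₖ diagonal (RCLike.ofReal ∘ q)) *
              (Uρᴴ ⊗ₖ Bᴴ)) * Uᴴ := by rw [← Matrix.mul_kronecker_mul, ← Matrix.mul_kronecker_mul]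
      _ = V * diagonal (RCLike.ofReal ∘ r) * Vᴴ := by
          rw [Matrix.diagonal_kronecker_diagonal, hd, hVdef, conjTranspose_mul,
            ← myConjTranspose_kronecker]
          simp only [Matrix.mul_assoc]
  have hτH : τ.IsHermitian := by
    have hr0 : ∀ ab, (0:ℂ) ≤ (RCLike.ofReal ∘ r) ab := by
      intro ab
      simp only [Function.comp_apply]
      rw [RCLike.ofReal_nonneg]
      exact mul_nonneg (hρP.eigenvalues_nonneg _) (hσP.eigenvalues_nonneg _)
    rw [hτspec]
    exact ((Matrix.PosSemidef.diagonal hr0).mul_mul_conjTranspose_same V).1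
  have hρ''H : (ptraceC τ).IsHermitian := ptraceC_isHermitian hτH
  set p : Fin dS → ℝ := hρ''H.eigenvalues with hpdef
  set A : Matrix (Fin dS) (Fin dS) ℂ := (hρ''H.eigenvectorUnitary : Matrix (Fin dS) (Fin dS) ℂ)
    with hAdef
  have hAu : A ∈ Matrix.unitaryGroup (Fin dS) ℂ := hρ''H.eigenvectorUnitary.2
  have hAdiag : Aᴴ * (ptraceC τ) * A = diagonal (RCLike.ofReal ∘ p) := by
    have := hρ''H.conjStarAlgAut_star_eigenvectorUnitary
    rwa [Unitary.conjStarAlgAut_apply, Unitary.coe_star, star_star, Matrix.star_eq_conjTranspose] at this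
  have hBdiag : Bᴴ * σ * B = diagonal (RCLike.ofReal ∘ q) := by
    have := hσH.conjStarAlgAut_star_eigenvectorUnitary
    rwa [Unitary.conjStarAlgAut_apply, Unitary.coe_star, star_star, Matrix.star_eq_conjTranspose] at this
  set M : Matrix (Fin dS × Fin dC) (Fin dS × Fin dC) ℂ := Vᴴ * (A ⊗ₖ B) with hMdef
  have hMu : M ∈ Matrix.unitaryGroup (Fin dS × Fin dC) ℂ := by
    have hVH : Vᴴ ∈ Matrix.unitaryGroup (Fin dS × Fin dC) ℂ := by
      rw [Matrix.mem_unitaryGroup_iff, Matrix.star_eq_conjTranspose, conjTranspose_conjTranspose]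
      have := Matrix.mem_unitaryGroup_iff'.mp hVu
      rwa [Matrix.star_eq_conjTranspose] at this
    exact mul_mem hVH (myKron_unitary hAu hBu)
  set c : (Fin dS × Fin dC) → (Fin dS × Fin dC) → ℝ := fun i ab => Complex.normSq (M i ab)
    with hcdef
  -- key component identity
  have hkey : ∀ x, ((A ⊗ₖ B)ᴴ * τ * (A ⊗ₖ B)) x x = ((∑ i, r i * c i x : ℝ) : ℂ) := by
    intro x
    have hconj : (A ⊗ₖ B)ᴴ * τ * (A ⊗ₖ B) = Mᴴ * (diagonal (RCLike.ofReal ∘ r) * M) := by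
      rw [hτspec, hMdef]
      simp only [conjTranspose_mul, conjTranspose_conjTranspose, Matrix.mul_assoc]
    rw [hconj, Matrix.mul_apply, Complex.ofReal_sum]
    refine Finset.sum_congr rfl fun i _ => ?_
    simp only [conjTranspose_apply, Matrix.diagonal_mul, hcdef, Function.comp_apply]
    rw [Complex.ofReal_mul]
    rw [show (star (M i x)) * ((RCLike.ofReal (r i) : ℂ) * M i x)
        = (RCLike.ofReal (r i) : ℂ) * (M i x * star (M i x)) by ring]
    rw [Complex.star_def, Complex.mul_conj]
    rfl
  -- marginal identities
  have hBB : B * Bᴴ = 1 := by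
    have := Matrix.mem_unitaryGroup_iff.mp hBu
    rwa [Matrix.star_eq_conjTranspose] at this
  have hAA : A * Aᴴ = 1 := by
    have := Matrix.mem_unitaryGroup_iff.mp hAu
    rwa [Matrix.star_eq_conjTranspose] at this
  have hE2 : ∀ a, ∑ b, (∑ i, r i * c i (a, b)) = p a := by
    intro a
    apply Complex.ofReal_injective
    set Da : Matrix (Fin dS) (Fin dS) ℂ :=
      diagonal (fun a' => if a' = a then (1:ℂ) else 0) with hDadef
    have hKK : (A ⊗ₖ B) * (Da ⊗ₖ (1 : Matrix (Fin dC) (Fin dC) ℂ)) * (A ⊗ₖ B)ᴴ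
        = (A * Da * Aᴴ) ⊗ₖ (1 : Matrix (Fin dC) (Fin dC) ℂ) := by
      rw [myConjTranspose_kronecker, ← Matrix.mul_kronecker_mul, ← Matrix.mul_kronecker_mul,
        Matrix.mul_one, hBB]
    have hdiagsum : ∀ (X : Matrix (Fin dS × Fin dC) (Fin dS × Fin dC) ℂ),
        (X * (Da ⊗ₖ (1 : Matrix (Fin dC) (Fin dC) ℂ))).trace = ∑ b, X (a, b) (a, b) := by
      intro X
      have h1 : Da ⊗ₖ (1 : Matrix (Fin dC) (Fin dC) ℂ)
          = diagonal (fun ab : Fin dS × Fin dC => if ab.1 = a then (1:ℂ) else 0) := by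
        rw [hDadef, ← Matrix.diagonal_one, Matrix.diagonal_kronecker_diagonal]
        simp
      rw [h1]
      simp [Matrix.trace, Matrix.diag, Matrix.mul_diagonal, Fintype.sum_prod_type, mul_ite,
        mul_one, mul_zero, Finset.sum_ite_irrel, Finset.sum_ite_eq', Finset.sum_const_zero]
      rw [Finset.sum_comm]
      simp [Finset.sum_ite_eq']
    calc ((∑ b, ∑ i, r i * c i (a, b) : ℝ) : ℂ)
        = ∑ b, ((A ⊗ₖ B)ᴴ * τ * (A ⊗ₖ B)) (a, b) (a, b) := by
          rw [Complex.ofReal_sum]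
          exact Finset.sum_congr rfl fun b _ => (hkey (a, b)).symm
      _ = ((A ⊗ₖ B)ᴴ * τ * (A ⊗ₖ B) * (Da ⊗ₖ (1 : Matrix (Fin dC) (Fin dC) ℂ))).trace :=
          (hdiagsum _).symm
      _ = (τ * ((A ⊗ₖ B) * (Da ⊗ₖ (1 : Matrix (Fin dC) (Fin dC) ℂ)) * (A ⊗ₖ B)ᴴ)).trace :=
          trace_conj_step _ _ _
      _ = ((ptraceC τ) * (A * Da * Aᴴ)).trace := by rw [hKK]; exact trace_mul_kron_one τ _
      _ = ((Aᴴ * (ptraceC τ) * A) * Da).trace := (trace_conj_step A (ptraceC τ) Da).symm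
      _ = (diagonal (RCLike.ofReal ∘ p) * Da).trace := by rw [hAdiag]
      _ = ((p a : ℝ) : ℂ) := by
          rw [hDadef, Matrix.diagonal_mul_diagonal, Matrix.trace_diagonal]
          simp
  have hE3 : ∀ b, ∑ a, (∑ i, r i * c i (a, b)) = q b := by
    intro b
    apply Complex.ofReal_injective
    set Db : Matrix (Fin dC) (Fin dC) ℂ :=
      diagonal (fun b' => if b' = b then (1:ℂ) else 0) with hDbdef
    have hKK : (A ⊗ₖ B) * ((1 : Matrix (Fin dS) (Fin dS) ℂ) ⊗ₖ Db) * (A ⊗ₖ B)ᴴ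
        = (1 : Matrix (Fin dS) (Fin dS) ℂ) ⊗ₖ (B * Db * Bᴴ) := by
      rw [myConjTranspose_kronecker, ← Matrix.mul_kronecker_mul, ← Matrix.mul_kronecker_mul,
        Matrix.mul_one, hAA]
    have hdiagsum : ∀ (X : Matrix (Fin dS × Fin dC) (Fin dS × Fin dC) ℂ),
        (X * ((1 : Matrix (Fin dS) (Fin dS) ℂ) ⊗ₖ Db)).trace = ∑ a, X (a, b) (a, b) := by
      intro X
      have h1 : (1 : Matrix (Fin dS) (Fin dS) ℂ) ⊗ₖ Db
          = diagonal (fun ab : Fin dS × Fin dC => if ab.2 = b then (1:ℂ) else 0) := by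
        rw [hDbdef, ← Matrix.diagonal_one, Matrix.diagonal_kronecker_diagonal]
        simp
      rw [h1]
      simp [Matrix.trace, Matrix.diag, Matrix.mul_diagonal, Fintype.sum_prod_type, mul_ite,
        mul_one, mul_zero, Finset.sum_ite_irrel, Finset.sum_ite_eq', Finset.sum_const_zero]
    calc ((∑ a, ∑ i, r i * c i (a, b) : ℝ) : ℂ)
        = ∑ a, ((A ⊗ₖ B)ᴴ * τ * (A ⊗ₖ B)) (a, b) (a, b) := by
          rw [Complex.ofReal_sum]
          exact Finset.sum_congr rfl fun a _ => (hkey (a, b)).symm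
      _ = ((A ⊗ₖ B)ᴴ * τ * (A ⊗ₖ B) * ((1 : Matrix (Fin dS) (Fin dS) ℂ) ⊗ₖ Db)).trace :=
          (hdiagsum _).symm
      _ = (τ * ((A ⊗ₖ B) * ((1 : Matrix (Fin dS) (Fin dS) ℂ) ⊗ₖ Db) * (A ⊗ₖ B)ᴴ)).trace :=
          trace_conj_step _ _ _
      _ = ((ptraceS τ) * (B * Db * Bᴴ)).trace := by rw [hKK]; exact trace_one_kron_mul τ _
      _ = ((Bᴴ * σ * B) * Db).trace := by rw [hcat]; exact (trace_conj_step B σ Db).symm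
      _ = (diagonal (RCLike.ofReal ∘ q) * Db).trace := by rw [hBdiag]
      _ = ((q b : ℝ) : ℂ) := by
          rw [hDbdef, Matrix.diagonal_mul_diagonal, Matrix.trace_diagonal]
          simp
  -- doubly stochastic
  have hMMH : M * Mᴴ = 1 := by
    have := Matrix.mem_unitaryGroup_iff.mp hMu
    rwa [Matrix.star_eq_conjTranspose] at this
  have hMHM : Mᴴ * M = 1 := by
    have := Matrix.mem_unitaryGroup_iff'.mp hMu
    rwa [Matrix.star_eq_conjTranspose] at this
  have hrow : ∀ i, ∑ ab, c i ab = 1 := by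
    intro i
    apply Complex.ofReal_injective
    calc ((∑ ab, c i ab : ℝ) : ℂ) = ∑ ab, M i ab * star (M i ab) := by
          rw [Complex.ofReal_sum]
          refine Finset.sum_congr rfl fun ab _ => ?_
          rw [hcdef, Complex.star_def, Complex.mul_conj]
      _ = (M * Mᴴ) i i := by
          rw [Matrix.mul_apply]
          exact Finset.sum_congr rfl fun ab _ => by rw [conjTranspose_apply]
      _ = 1 := by rw [hMMH]; simp
  have hcol : ∀ ab, ∑ i, c i ab = 1 := by
    intro ab
    apply Complex.ofReal_injective
    calc ((∑ i, c i ab : ℝ) : ℂ) = ∑ i, star (M i ab) * M i ab := by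
          rw [Complex.ofReal_sum]
          refine Finset.sum_congr rfl fun i _ => ?_
          rw [hcdef, Complex.star_def, mul_comm, Complex.mul_conj]
      _ = (Mᴴ * M) ab ab := by
          rw [Matrix.mul_apply]
          exact Finset.sum_congr rfl fun i _ => by rw [conjTranspose_apply]
      _ = 1 := by rw [hMHM]; simp
  -- sums
  have hUρdiag : Uρᴴ * ρ * Uρ = diagonal (RCLike.ofReal ∘ p0) := by
    have := hρH.conjStarAlgAut_star_eigenvectorUnitary
    rwa [Unitary.conjStarAlgAut_apply, Unitary.coe_star, star_star, Matrix.star_eq_conjTranspose] at this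
  have diag_trace_one : ∀ {n : Type} [Fintype n] [DecidableEq n] (f : n → ℝ)
      (N : Matrix n n ℂ) (W : Matrix n n ℂ), W * Wᴴ = 1 → Wᴴ * N * W = diagonal (RCLike.ofReal ∘ f)
      → N.trace = 1 → ∑ x, f x = 1 := by
    intro n _ _ f N W hW hdiag htr
    apply Complex.ofReal_injective
    have h1 : (diagonal (RCLike.ofReal ∘ f)).trace = N.trace := by
      rw [← hdiag, Matrix.trace_mul_cycle, hW, Matrix.one_mul]
    rw [Matrix.trace_diagonal] at h1
    calc ((∑ x, f x : ℝ) : ℂ) = ∑ x, (RCLike.ofReal ∘ f) x := by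
          rw [Complex.ofReal_sum]; rfl
      _ = N.trace := h1
      _ = 1 := htr
      _ = ((1 : ℝ) : ℂ) := by norm_num
  have hp0sum : ∑ a, p0 a = 1 := by
    have hUρUρ : Uρ * Uρᴴ = 1 := by
      have := Matrix.mem_unitaryGroup_iff.mp hUρu
      rwa [Matrix.star_eq_conjTranspose] at this
    exact diag_trace_one p0 ρ Uρ hUρUρ hUρdiag hρtr
  have hqsum : ∑ b, q b = 1 := by
    exact diag_trace_one q σ B hBB hBdiag hσtr
  have hτtr : τ.trace = 1 := by
    have hUU : Uᴴ * U = 1 := by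
      have := Matrix.mem_unitaryGroup_iff'.mp hU
      rwa [Matrix.star_eq_conjTranspose] at this
    rw [hτdef, Matrix.trace_mul_cycle, hUU, Matrix.one_mul,
      Matrix.trace_kronecker, hρtr, hσtr, mul_one]
  have hpsum : ∑ a, p a = 1 := by
    have htr'' : (ptraceC τ).trace = 1 := by rw [trace_ptraceC, hτtr]
    exact diag_trace_one p (ptraceC τ) A hAA hAdiag htr''
  -- nonnegativity
  have hp00 : ∀ a, 0 ≤ p0 a := fun a => hρP.eigenvalues_nonneg a
  have hq0 : ∀ b, 0 ≤ q b := fun b => hσP.eigenvalues_nonneg b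
  have hr0 : ∀ ab, 0 ≤ r ab := fun ab => mul_nonneg (hp00 _) (hq0 _)
  have hc0 : ∀ i ab, 0 ≤ c i ab := fun i ab => Complex.normSq_nonneg _
  have hm0 : ∀ a b, 0 ≤ ∑ i, r i * c i (a, b) :=
    fun a b => Finset.sum_nonneg fun i _ => mul_nonneg (hr0 i) (hc0 i (a,b))
  have hp0' : ∀ a, 0 ≤ p a := fun a =>
    (hE2 a) ▸ Finset.sum_nonneg fun b _ => hm0 a b
  have hq0' : ∀ b, 0 ≤ q b := hq0
  have hple : ∀ a b, (∑ i, r i * c i (a, b)) ≤ p a := by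
    intro a b
    rw [← hE2 a]
    exact Finset.single_le_sum (fun b' _ => hm0 a b') (Finset.mem_univ b)
  have hqle : ∀ a b, (∑ i, r i * c i (a, b)) ≤ q b := by
    intro a b
    rw [← hE3 b]
    exact Finset.single_le_sum (fun a' _ => hm0 a' b) (Finset.mem_univ a)
  -- Klein / subadditivity inequality
  have hrsum : ∑ ab, r ab = 1 := by
    rw [hrdef, Fintype.sum_prod_type, ← Finset.sum_mul_sum]
    rw [hp0sum, hqsum, mul_one]
  have main : ∑ a, p a * Real.log (p a) + ∑ b, q b * Real.log (q b)
      ≤ ∑ ab, r ab * Real.log (r ab) := by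
    have hF : ∀ (i ab : Fin dS × Fin dC), 0 ≤ c i ab *
        (r i * Real.log (r i) - r i * Real.log (p ab.1 * q ab.2) - r i + p ab.1 * q ab.2) := by
      intro i ab
      rcases eq_or_lt_of_le (hc0 i ab) with h0 | hcpos
      · rw [← h0, zero_mul]
      · refine mul_nonneg hcpos.le
          (gibbs_ineq (hr0 i) (mul_nonneg (hp0' ab.1) (hq0 ab.2)) ?_)
        intro hri
        have hrpos : 0 < r i := (hr0 i).lt_of_ne (Ne.symm hri)
        have hmpos : 0 < ∑ i', r i' * c i' ab := by
          refine lt_of_lt_of_le (mul_pos hrpos hcpos) ?_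
          exact Finset.single_le_sum
            (fun j _ => mul_nonneg (hr0 j) (hc0 j ab)) (Finset.mem_univ i)
        have h1 : 0 < p ab.1 := lt_of_lt_of_le hmpos (by simpa using hple ab.1 ab.2)
        have h2 : 0 < q ab.2 := lt_of_lt_of_le hmpos (by simpa using hqle ab.1 ab.2)
        exact (mul_pos h1 h2).ne'
    have hS : 0 ≤ ∑ i, ∑ ab, c i ab *
        (r i * Real.log (r i) - r i * Real.log (p ab.1 * q ab.2) - r i + p ab.1 * q ab.2) :=
      Finset.sum_nonneg fun i _ => Finset.sum_nonneg fun ab _ => hF i ab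
    have hT1 : ∑ i, ∑ ab : Fin dS × Fin dC, c i ab * (r i * Real.log (r i))
        = ∑ i, r i * Real.log (r i) := by
      refine Finset.sum_congr rfl fun i _ => ?_
      rw [← Finset.sum_mul, hrow i, one_mul]
    have hT3 : ∑ i, ∑ ab : Fin dS × Fin dC, c i ab * r i = 1 := by
      calc ∑ i, ∑ ab : Fin dS × Fin dC, c i ab * r i
          = ∑ i, r i := by
            refine Finset.sum_congr rfl fun i _ => ?_
            rw [← Finset.sum_mul, hrow i, one_mul]
        _ = 1 := hrsum
    have hT4 : ∑ i, ∑ ab : Fin dS × Fin dC, c i ab * (p ab.1 * q ab.2) = 1 := by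
      rw [Finset.sum_comm]
      calc ∑ ab : Fin dS × Fin dC, ∑ i, c i ab * (p ab.1 * q ab.2)
          = ∑ ab : Fin dS × Fin dC, p ab.1 * q ab.2 := by
            refine Finset.sum_congr rfl fun ab _ => ?_
            rw [← Finset.sum_mul, hcol ab, one_mul]
        _ = (∑ a, p a) * (∑ b, q b) := by
            rw [Fintype.sum_prod_type, ← Finset.sum_mul_sum]
        _ = 1 := by rw [hpsum, hqsum, mul_one]
    have hT2 : ∑ i, ∑ ab : Fin dS × Fin dC, c i ab * (r i * Real.log (p ab.1 * q ab.2))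
        = ∑ a, p a * Real.log (p a) + ∑ b, q b * Real.log (q b) := by
      rw [Finset.sum_comm]
      have step1 : ∀ ab : Fin dS × Fin dC,
          ∑ i, c i ab * (r i * Real.log (p ab.1 * q ab.2))
          = (∑ i, r i * c i ab) * Real.log (p ab.1 * q ab.2) := by
        intro ab
        rw [Finset.sum_mul]
        exact Finset.sum_congr rfl fun i _ => by ring
      have step2 : ∀ ab : Fin dS × Fin dC,
          (∑ i, r i * c i ab) * Real.log (p ab.1 * q ab.2)
          = (∑ i, r i * c i ab) * Real.log (p ab.1)
            + (∑ i, r i * c i ab) * Real.log (q ab.2) := by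
        intro ab
        rcases eq_or_lt_of_le (by simpa using hm0 ab.1 ab.2) with h0 | hpos
        · rw [← h0]; ring
        · have h1 : 0 < p ab.1 := lt_of_lt_of_le hpos (by simpa using hple ab.1 ab.2)
          have h2 : 0 < q ab.2 := lt_of_lt_of_le hpos (by simpa using hqle ab.1 ab.2)
          rw [Real.log_mul h1.ne' h2.ne', mul_add]
      calc ∑ ab : Fin dS × Fin dC, ∑ i, c i ab * (r i * Real.log (p ab.1 * q ab.2))
          = ∑ ab : Fin dS × Fin dC, ((∑ i, r i * c i ab) * Real.log (p ab.1)
              + (∑ i, r i * c i ab) * Real.log (q ab.2)) := by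
            refine Finset.sum_congr rfl fun ab _ => ?_
            rw [step1 ab, step2 ab]
        _ = (∑ a, ∑ b, (∑ i, r i * c i (a, b)) * Real.log (p a))
              + (∑ a, ∑ b, (∑ i, r i * c i (a, b)) * Real.log (q b)) := by
            rw [Fintype.sum_prod_type, ← Finset.sum_add_distrib]
            exact Finset.sum_congr rfl fun a _ => Finset.sum_add_distrib
        _ = ∑ a, p a * Real.log (p a) + ∑ b, q b * Real.log (q b) := by
            congr 1
            · refine Finset.sum_congr rfl fun a _ => ?_
              rw [← Finset.sum_mul, hE2 a]
            · rw [Finset.sum_comm]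
              refine Finset.sum_congr rfl fun b _ => ?_
              rw [← Finset.sum_mul, hE3 b]
    have hexpand : ∑ i, ∑ ab, c i ab *
        (r i * Real.log (r i) - r i * Real.log (p ab.1 * q ab.2) - r i + p ab.1 * q ab.2)
        = (∑ i, ∑ ab : Fin dS × Fin dC, c i ab * (r i * Real.log (r i)))
          - (∑ i, ∑ ab : Fin dS × Fin dC, c i ab * (r i * Real.log (p ab.1 * q ab.2)))
          - (∑ i, ∑ ab : Fin dS × Fin dC, c i ab * r i)
          + (∑ i, ∑ ab : Fin dS × Fin dC, c i ab * (p ab.1 * q ab.2)) := by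
      simp only [mul_sub, mul_add, Finset.sum_sub_distrib, Finset.sum_add_distrib]
    rw [hexpand, hT1, hT2, hT3, hT4] at hS
    linarith
  -- additivity of entropy of the product state
  have hsplit : ∑ ab, r ab * Real.log (r ab)
      = ∑ a, p0 a * Real.log (p0 a) + ∑ b, q b * Real.log (q b) := by
    calc ∑ ab : Fin dS × Fin dC, r ab * Real.log (r ab)
        = ∑ a, ∑ b, ((p0 a * Real.log (p0 a)) * q b + p0 a * (q b * Real.log (q b))) := by
          rw [Fintype.sum_prod_type]
          refine Finset.sum_congr rfl fun a _ => Finset.sum_congr rfl fun b _ => ?_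
          have := xy_log_xy (hp00 a) (hq0 b)
          calc r (a, b) * Real.log (r (a, b)) = p0 a * q b * Real.log (p0 a * q b) := rfl
            _ = p0 a * q b * Real.log (p0 a) + p0 a * q b * Real.log (q b) := this
            _ = (p0 a * Real.log (p0 a)) * q b + p0 a * (q b * Real.log (q b)) := by ring
      _ = (∑ a, p0 a * Real.log (p0 a)) * (∑ b, q b)
            + (∑ a, p0 a) * (∑ b, q b * Real.log (q b)) := by
          rw [Finset.sum_mul_sum, Finset.sum_mul_sum, ← Finset.sum_add_distrib]
          refine Finset.sum_congr rfl fun a _ => ?_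
          rw [← Finset.sum_add_distrib]
      _ = ∑ a, p0 a * Real.log (p0 a) + ∑ b, q b * Real.log (q b) := by
          rw [hp0sum, hqsum, mul_one, one_mul]
  -- conclude
  have hfinal : ∑ a, p a * Real.log (p a) ≤ ∑ a, p0 a * Real.log (p0 a) := by
    rw [hsplit] at main; linarith
  rw [vnEntropy, vnEntropy, dif_pos hρH, dif_pos hρ''H]
  simp only [← hp0def, ← hpdef]
  linarith
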